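/- Let n ≥ 2 and k ∈ ℕ, and for each 1 ≤ i ≤ n let m^i_0 > m^i_1 > ⋯ > m^i_k be strictly decreasing positive integers. Set R₀ := ∏_{i=1}^n [0, 2^{−m^i_k}]. For integers m ≥ 1 and l ≥ 0 let C(m, l) denote the set of nonincreasing l-tuples of integers in {0, …, m−1}. For J = (j₁, …, j_{n−1}) ∈ C(k+1, n−1), with the conventions j₀ := k and j_n := 0, define Y_J := { x ∈ R₀ : ∏_{i=1}^n ∏_{μ=j_i}^{j_{i−1}} r_{m^i_μ}(x_i) = 1 }. For 2 ≤ r ≤ n and integers k ≥ j₁ ≥ ⋯ ≥ j_{r−1} ≥ 0 define E_{j₁,…,j_{r−1}} := ⋃_{J' ∈ C(j_{r−1}+1, n−r)} Y_{(j₁,…,j_{r−1},J')}. Then for every 2 ≤ r ≤ n and every nonincreasing sequence k ≥ j₁ ≥ ⋯ ≥ j_{r−2} ≥ 0 (the empty sequence when r = 2, with the convention j₀ := k), one has |⋃_{j=0}^{j_{r−2}} E_{j₁,…,j_{r−2},j}| ≥ (1/2) ∑_{j=0}^{j_{r−2}} |E_{j₁,…,j_{r−2},j}|. -/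

import Mathlib

open MeasureTheory Set Filter
open scoped ENNReal

noncomputable section

/-- The standard rectangle `[0, α 0] × ⋯ × [0, α (n-1)]` in `ℝ^n`. -/
def stdRect (n : ℕ) (α : Fin n → ℝ) : Set (Fin n → ℝ) :=
  Set.univ.pi fun i => Set.Icc 0 (α i)

/-- A standard rectangle in `ℝ^n`: `[0,α₁]×⋯×[0,αₙ]` with `0 < αᵢ ≤ 1`. -/
def IsStandardRect {n : ℕ} (R : Set (Fin n → ℝ)) : Prop :=
  ∃ α : Fin n → ℝ, (∀ i, 0 < α i ∧ α i ≤ 1) ∧ R = stdRect n α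

/-- A standard dyadic rectangle in `ℝ^n`: each side is `2^{-mᵢ}` with `mᵢ ∈ ℕ`. -/
def IsStandardDyadicRect {n : ℕ} (R : Set (Fin n → ℝ)) : Prop :=
  ∃ m : Fin n → ℕ, R = stdRect n fun i => (2 : ℝ) ^ (-(m i : ℤ))

/-- The maximal operator associated to a family `𝓡` of rectangles, allowing all translates:
`M_𝓡 f (x) = sup { |R|⁻¹ ∫_{τ(R)} |f| : R ∈ 𝓡, τ translation, x ∈ τ(R) }`. -/
def maximalFn {n : ℕ} (𝓡 : Set (Set (Fin n → ℝ))) (f : (Fin n → ℝ) → ℝ)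
    (x : Fin n → ℝ) : ℝ≥0∞ :=
  ⨆ (R : Set (Fin n → ℝ)) (_ : R ∈ 𝓡) (v : Fin n → ℝ)
      (_ : x ∈ (fun y => v + y) '' R),
    (∫⁻ y in (fun y => v + y) '' R, ENNReal.ofReal |f y|) / volume R

/-- A family of sets has finite width if it is a finite union of subfamilies
each totally ordered by inclusion. -/
def FiniteWidth {β : Type*} (𝓕 : Set (Set β)) : Prop :=
  ∃ (N : ℕ) (c : Fin N → Set (Set β)),
    𝓕 = (⋃ i, c i) ∧ ∀ i, IsChain (· ⊆ ·) (c i)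

/-- An Orlicz function: convex, increasing on `[0,∞)`, vanishing at `0`. -/
def IsOrlicz (Φ : ℝ → ℝ) : Prop :=
  ConvexOn ℝ (Set.Ici 0) Φ ∧ MonotoneOn Φ (Set.Ici 0) ∧ Φ 0 = 0

/-- `Φ_d(t) = t (1 + log₊^d t)`. -/
def phiD (d : ℕ) (t : ℝ) : ℝ := t * (1 + max (Real.log t) 0 ^ d)

/-- `M_𝓡` satisfies a weak `L^Φ` inequality. -/
def WeakOrlicz {n : ℕ} (𝓡 : Set (Set (Fin n → ℝ))) (Φ : ℝ → ℝ) : Prop :=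
  ∃ C : ℝ, 0 < C ∧ ∀ f : (Fin n → ℝ) → ℝ, Measurable f →
    Integrable (fun x => Φ |f x|) → ∀ l : ℝ, 0 < l →
      volume {x | ENNReal.ofReal l < maximalFn 𝓡 f x} ≤
        ∫⁻ x, ENNReal.ofReal (Φ (C * |f x| / l))

/-- `M_𝓡` satisfies a weak `(1,1)` inequality. -/
def Weak11 {n : ℕ} (𝓡 : Set (Set (Fin n → ℝ))) : Prop :=
  ∃ C : ℝ, 0 < C ∧ ∀ f : (Fin n → ℝ) → ℝ, Measurable f → Integrable f →
    ∀ l : ℝ, 0 < l →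
      volume {x | ENNReal.ofReal l < maximalFn 𝓡 f x} ≤
        ENNReal.ofReal (C * (∫ x, |f x|) / l)

/-- `M_𝓡` satisfies a weak `L log^d L` inequality. -/
def WeakLLog {n : ℕ} (𝓡 : Set (Set (Fin n → ℝ))) (d : ℕ) : Prop :=
  ∃ c : ℝ, 0 < c ∧ ∀ f : (Fin n → ℝ) → ℝ, Measurable f → ∀ l : ℝ, 0 < l →
    volume {x | ENNReal.ofReal l < maximalFn 𝓡 f x} ≤
      ENNReal.ofReal c * ∫⁻ x, ENNReal.ofReal (phiD d (|f x| / l))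

/-- Projection onto the plane of coordinates `0` and `j`. -/
def planeProj {n : ℕ} (hn : 2 ≤ n) (j : Fin n) (x : Fin n → ℝ) : Fin 2 → ℝ :=
  ![x ⟨0, by omega⟩, x j]

/-- The family `𝓡_k = { [0,s₁]×⋯×[0,s_{n-1}]×[0, a/(s₁⋯s_{n-1})] : sᵢ ∈ 𝔻_k }`. -/
def guzmanFamily (n : ℕ) (hn : 2 ≤ n) (a : ℝ) (k : ℕ) : Set (Set (Fin n → ℝ)) :=
  { R | ∃ s : Fin n → ℝ,
      (∀ i : Fin n, (i : ℕ) < n - 1 → ∃ j : ℕ, j ≤ k ∧ s i = (2 : ℝ) ^ (-(j : ℤ))) ∧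
      s ⟨n - 1, by omega⟩ =
        a / ∏ i ∈ Finset.univ.filter (fun i : Fin n => (i : ℕ) < n - 1), s i ∧
      R = stdRect n s }

/-- The family `𝓡̃_k` in `ℝ^n`: rectangles
`[0,s₁]×⋯×[0,s_{n-2}]×[0, 2^{-(n-1)k}/(s₁⋯s_{n-2})]×[0,1]` with `sᵢ ∈ 𝔻_k`. -/
def exFamily (n : ℕ) (hn : 3 ≤ n) (k : ℕ) : Set (Set (Fin n → ℝ)) :=
  { R | ∃ s : Fin n → ℝ,
      (∀ i : Fin n, (i : ℕ) < n - 2 → ∃ j : ℕ, j ≤ k ∧ s i = (2 : ℝ) ^ (-(j : ℤ))) ∧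
      s ⟨n - 2, by omega⟩ = (2 : ℝ) ^ (-((n - 1) * k : ℤ)) /
        ∏ i ∈ Finset.univ.filter (fun i : Fin n => (i : ℕ) < n - 2), s i ∧
      s ⟨n - 1, by omega⟩ = 1 ∧
      R = stdRect n s }

/-- The hypothesis of Theorem `thm.stokn`: for every `k` there are a dyadic number
`α = 2^{-p} ≤ 2^{-k-1}` and strictly increasing dyadic numbers `0 < A i 0 < ⋯ < A i k ≤ 1`
(`i < n-1`) such that for every nonincreasing `J` with values `≤ k`,
the rectangle `(∏_{i<n-1} [0, A i (J i)]) × [0, 2^{-p}]` belongs to `𝓡`. -/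
def StokolosHyp (n : ℕ) (𝓡 : Set (Set (Fin n → ℝ))) : Prop :=
  ∀ k : ℕ, ∃ (p : ℕ) (A : ℕ → ℕ → ℝ),
    k + 1 ≤ p ∧
    (∀ i < n - 1, ∀ j ≤ k, ∃ m : ℕ, A i j = (2 : ℝ) ^ (-(m : ℤ))) ∧
    (∀ i < n - 1, ∀ j < k, A i j < A i (j + 1)) ∧
    (∀ i < n - 1, A i k ≤ 1) ∧
    ∀ J : ℕ → ℕ, (∀ l, J l ≤ k) → (∀ a b : ℕ, a ≤ b → J b ≤ J a) →
      stdRect n (fun i : Fin n =>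
        if (i : ℕ) < n - 1 then A (i : ℕ) (J (i : ℕ)) else (2 : ℝ) ^ (-(p : ℤ))) ∈ 𝓡

/-- For a chain `R_0 ≺ ⋯ ≺ R_k` with `R_j = ∏_l [0, α l j]`, the rectangle
`R^i_j = p_{1,…,i-1}(R_k) × p_{i,…,n}(R_j)` (here `i` is 0-indexed). -/
def hatRect (n : ℕ) (α : Fin n → ℕ → ℝ) (k : ℕ) (i : Fin n) (j : ℕ) :
    Set (Fin n → ℝ) :=
  { x | ∀ l : Fin n, ((l : ℕ) < (i : ℕ) → x l ∈ Set.Icc 0 (α l k)) ∧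
        ((i : ℕ) ≤ (l : ℕ) → x l ∈ Set.Icc 0 (α l j)) }

/-- Rademacher-type functions: `r 1 = χ_{ℤ+[0,1/2)}` and `r i (x) = r (i-1) (2x mod 1)`,
i.e. `r i (x) = 1` iff `fract (2^{i-1} x) < 1/2`. -/
def rademacher (i : ℕ) (x : ℝ) : ℝ :=
  if Int.fract ((2 : ℝ) ^ (i - 1) * x) < 1 / 2 then 1 else 0

/-- The set `Y_J ⊆ R₀` (here `J : ℕ → ℕ` carries the conventions `J 0 = k`, `J n = 0`;
coordinate `i` of `ℝ^n` is 0-indexed, corresponding to the paper's `i+1`). -/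
def Yset (n k : ℕ) (m : ℕ → ℕ → ℕ) (J : ℕ → ℕ) : Set (Fin n → ℝ) :=
  stdRect n (fun i => (2 : ℝ) ^ (-(m (i : ℕ) k : ℤ))) ∩
    { x | (∏ i : Fin n, ∏ μ ∈ Finset.Icc (J ((i : ℕ) + 1)) (J (i : ℕ)),
        rademacher (m (i : ℕ) μ) (x i)) = 1 }

/-- The set `E_{j₁,…,j_{r-1}}`: union of the `Y_J` over the `J` extending the given prefix
`j` on positions `1,…,r-1`, nonincreasing, with `J 0 = k` and `J n = 0`. -/
def Eset (n k r : ℕ) (m : ℕ → ℕ → ℕ) (j : ℕ → ℕ) : Set (Fin n → ℝ) :=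
  ⋃ J ∈ { J : ℕ → ℕ | J 0 = k ∧ J n = 0 ∧ (∀ a b : ℕ, a ≤ b → J b ≤ J a) ∧
      ∀ l, 1 ≤ l → l < r → J l = j l },
    Yset n k m J
lemma fract_lt_half_iff (s : ℝ) : Int.fract s < 1/2 ↔ Even ⌊2*s⌋ := by
  have hs : (2:ℝ) * s = 2 * Int.fract s + ((2*⌊s⌋ : ℤ) : ℝ) := by
    push_cast; rw [Int.fract]; ring
  rw [hs, Int.floor_add_intCast]
  have h0 : 0 ≤ Int.fract s := Int.fract_nonneg s
  have h1 : Int.fract s < 1 := Int.fract_lt_one s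
  constructor
  · intro h
    have hz : ⌊2 * Int.fract s⌋ = 0 := by
      rw [Int.floor_eq_zero_iff]
      constructor
      · linarith
      · linarith
    rw [hz]
    exact ⟨⌊s⌋, by ring⟩
  · intro h
    by_contra hc
    push_neg at hc
    have hz : ⌊2 * Int.fract s⌋ = 1 := by
      rw [Int.floor_eq_iff]
      constructor <;> push_cast <;> linarith
    rw [hz] at h
    obtain ⟨c, hcc⟩ := h
    omega

lemma rademacher_eq_one_iff (q : ℕ) (t : ℝ) :
    rademacher q t = 1 ↔ Int.fract ((2:ℝ)^(q-1) * t) < 1/2 := by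
  unfold rademacher; split <;> simp_all

lemma rademacher_mem01 (q : ℕ) (t : ℝ) : rademacher q t = 0 ∨ rademacher q t = 1 := by
  unfold rademacher; split <;> simp

lemma rademacher_one_iff_even {q : ℕ} (hq : 1 ≤ q) (t : ℝ) :
    rademacher q t = 1 ↔ Even ⌊(2:ℝ)^q * t⌋ := by
  rw [rademacher_eq_one_iff, fract_lt_half_iff]
  have h : (2:ℝ) * ((2:ℝ)^(q-1) * t) = (2:ℝ)^q * t := by
    rw [← mul_assoc]
    congr 1
    rw [← pow_succ']
    congr 1
    omega
  rw [h]

lemma floor_eq_floor_of_dyadic (s : ℕ) (N : ℤ) {y z : ℝ}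
    (hy1 : (N:ℝ)/2^s ≤ y) (hy2 : y < ((N:ℝ)+1)/2^s)
    (hz1 : (N:ℝ)/2^s ≤ z) (hz2 : z < ((N:ℝ)+1)/2^s) : ⌊y⌋ = ⌊z⌋ := by
  have hpow : (0:ℝ) < 2^s := by positivity
  set w := ⌊(N:ℝ)/2^s⌋ with hw
  have hwle : (w:ℝ) ≤ (N:ℝ)/2^s := Int.floor_le _
  have hwlt : (N:ℝ)/2^s < w + 1 := Int.lt_floor_add_one _
  have hN : (N:ℝ) < ((w+1) * 2^s : ℤ) := by
    rw [div_lt_iff₀ hpow] at hwlt; push_cast; linarith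
  have hNz : (N:ℤ) + 1 ≤ (w+1) * 2^s := by
    have h' : (N:ℤ) < (w+1) * 2^s := by exact_mod_cast hN
    omega
  have hup : ((N:ℝ)+1)/2^s ≤ (w:ℝ) + 1 := by
    rw [div_le_iff₀ hpow]
    have : ((N:ℤ)+1 : ℝ) ≤ (((w+1) * 2^s : ℤ) : ℝ) := by exact_mod_cast hNz
    push_cast at this ⊢
    linarith
  have key : ∀ u : ℝ, (N:ℝ)/2^s ≤ u → u < ((N:ℝ)+1)/2^s → ⌊u⌋ = w := by
    intro u hu1 hu2
    rw [Int.floor_eq_iff]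
    exact ⟨le_trans hwle hu1, lt_of_lt_of_le hu2 hup⟩
  rw [key y hy1 hy2, key z hz1 hz2]

lemma floor_shift {t : ℝ} {q M' : ℕ} (hq : q < M') (he : Even ⌊(2:ℝ)^M' * t⌋) :
    ⌊(2:ℝ)^q * (t + ((2:ℝ)^M')⁻¹)⌋ = ⌊(2:ℝ)^q * t⌋ := by
  obtain ⟨c, hc⟩ := he
  set s : ℕ := M' - 1 - q with hs
  have hM : M' = q + 1 + s := by omega
  have hP : (2:ℝ)^M' = 2^q * 2 * 2^s := by
    rw [hM, pow_add, pow_add, pow_one]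
  have hpq : (0:ℝ) < 2^q := by positivity
  have hps : (0:ℝ) < 2^s := by positivity
  have hA : ((c:ℝ)+c) ≤ 2^M' * t := by
    have := Int.floor_le ((2:ℝ)^M' * t)
    rw [hc] at this; push_cast at this; linarith
  have hB : 2^M' * t < ((c:ℝ)+c) + 1 := by
    have := Int.lt_floor_add_one ((2:ℝ)^M' * t)
    rw [hc] at this; push_cast at this; linarith
  rw [hP] at hA hB
  have hz : (2:ℝ)^q * (t + ((2:ℝ)^M')⁻¹) = 2^q * t + (2 * 2^s)⁻¹ := by
    rw [hP]; field_simp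
  symm
  apply floor_eq_floor_of_dyadic s c
  · rw [div_le_iff₀ hps]; nlinarith
  · rw [lt_div_iff₀ hps]; push_cast; nlinarith
  · rw [hz, div_le_iff₀ hps]; nlinarith [inv_pos.mpr (by positivity : (0:ℝ) < 2 * 2^s)]
  · rw [hz, lt_div_iff₀ hps]
    push_cast
    have hinv : ((2:ℝ) * 2^s)⁻¹ * (2 * 2^s) = 1 := by
      apply inv_mul_cancel₀; positivity
    nlinarith

lemma rademacher_shift {t : ℝ} {q M' : ℕ} (h1 : 1 ≤ q) (hq : q < M')
    (hr : rademacher M' t = 1) :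
    rademacher q (t + ((2:ℝ)^M')⁻¹) = rademacher q t := by
  have hM1 : 1 ≤ M' := by omega
  have he : Even ⌊(2:ℝ)^M' * t⌋ := (rademacher_one_iff_even hM1 t).mp hr
  have key : rademacher q (t + ((2:ℝ)^M')⁻¹) = 1 ↔ rademacher q t = 1 := by
    rw [rademacher_one_iff_even h1, rademacher_one_iff_even h1, floor_shift hq he]
  rcases rademacher_mem01 q (t + ((2:ℝ)^M')⁻¹) with h | h <;>
    rcases rademacher_mem01 q t with h' | h' <;> simp_all

lemma rademacher_flip {t : ℝ} {M' : ℕ} (h1 : 1 ≤ M') (hr : rademacher M' t = 1) :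
    rademacher M' (t + ((2:ℝ)^M')⁻¹) = 0 := by
  obtain ⟨p, rfl⟩ : ∃ p, M' = p + 1 := ⟨M'-1, by omega⟩
  have hfr : Int.fract ((2:ℝ)^p * t) < 1/2 := by
    have := (rademacher_eq_one_iff _ _).mp hr
    simpa using this
  have key : (2:ℝ)^p * (t + ((2:ℝ)^(p+1))⁻¹) = 2^p * t + 1/2 := by
    rw [pow_succ]; field_simp
  unfold rademacher
  simp only [Nat.add_sub_cancel]
  rw [key]
  set y := (2:ℝ)^p * t with hy
  have hfrv : Int.fract (y + 1/2) = Int.fract y + 1/2 := by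
    have h1' : y + 1/2 = Int.fract y + 1/2 + (⌊y⌋ : ℝ) := by rw [Int.fract]; ring
    rw [h1', Int.fract_add_intCast]
    apply Int.fract_eq_self.mpr
    constructor
    · have := Int.fract_nonneg y; linarith
    · linarith
  rw [if_neg]
  rw [hfrv]
  have := Int.fract_nonneg y
  linarith

lemma stay_le {t : ℝ} {M M' : ℕ} (hMM : M < M') (ht0 : 0 ≤ t)
    (htB : t < ((2:ℝ)^M)⁻¹) (hr : rademacher M' t = 1) :
    t + ((2:ℝ)^M')⁻¹ ≤ ((2:ℝ)^M)⁻¹ := by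
  have h1 : 1 ≤ M' := by omega
  obtain ⟨c, hc⟩ := (rademacher_one_iff_even h1 t).mp hr
  have hpM : (0:ℝ) < 2^M := by positivity
  have hpM' : (0:ℝ) < 2^M' := by positivity
  have hA : ((c:ℝ)+c) ≤ 2^M' * t := by
    have := Int.floor_le ((2:ℝ)^M' * t); rw [hc] at this; push_cast at this; linarith
  have hB : 2^M' * t < ((c:ℝ)+c) + 1 := by
    have := Int.lt_floor_add_one ((2:ℝ)^M' * t); rw [hc] at this; push_cast at this; linarith
  obtain ⟨e, he⟩ : ∃ e, M' - M = e + 1 := ⟨M'-M-1, by omega⟩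
  have hMe : M' = M + e + 1 := by omega
  have hPP : (2:ℝ)^M' = 2^M * (2 * 2^e) := by rw [hMe, pow_add, pow_add, pow_one]; ring
  -- 2^M' * t < 2^(e+1) = 2*2^e
  have hub : (2:ℝ)^M' * t < 2 * 2^e := by
    have h2 : (2:ℝ)^M' * t < 2^M' * (2^M)⁻¹ := by
      apply mul_lt_mul_of_pos_left htB hpM'
    have h3 : (2:ℝ)^M' * (2^M)⁻¹ = 2 * 2^e := by
      rw [hPP]; field_simp
    rw [h3] at h2
    exact h2
  -- integer parity bound: c + c + 2 ≤ 2 * 2^e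
  have hcz : (c:ℤ) + c < 2 * 2^e := by
    have : ((c:ℝ)+c) < 2 * 2^e := lt_of_le_of_lt hA hub
    exact_mod_cast this
  have h2le : (c:ℤ) + c + 2 ≤ 2 * 2^e := by omega
  -- conclude
  have hfin : t + ((2:ℝ)^M')⁻¹ < (((c:ℝ)+c) + 2) / 2^M' := by
    rw [lt_div_iff₀ hpM']
    have ht' : t * 2^M' < ((c:ℝ)+c) + 1 := by rw [mul_comm]; exact hB
    have : ((2:ℝ)^M')⁻¹ * 2^M' = 1 := inv_mul_cancel₀ (ne_of_gt hpM')
    nlinarith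
  have hfin2 : (((c:ℝ)+c) + 2) / 2^M' ≤ ((2:ℝ)^M)⁻¹ := by
    rw [div_le_iff₀ hpM', hPP]
    have hle : ((c:ℝ)+c) + 2 ≤ 2 * 2^e := by exact_mod_cast h2le
    have : ((2:ℝ)^M)⁻¹ * (2^M * (2 * 2^e)) = 2 * 2^e := by
      rw [← mul_assoc, inv_mul_cancel₀ (ne_of_gt hpM), one_mul]
    rw [this]; exact hle
  linarith

lemma prod_eq_one_iff' {α : Type*} (s : Finset α) (f : α → ℝ)
    (h : ∀ a ∈ s, f a = 0 ∨ f a = 1) :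
    ∏ a ∈ s, f a = 1 ↔ ∀ a ∈ s, f a = 1 := by
  constructor
  · intro hp a ha
    by_contra hne
    have h0 : f a = 0 := (h a ha).resolve_right hne
    rw [Finset.prod_eq_zero ha h0] at hp
    norm_num at hp
  · exact Finset.prod_eq_one

lemma Yset_mem_iff (n k : ℕ) (m : ℕ → ℕ → ℕ) (J : ℕ → ℕ) (x : Fin n → ℝ) :
    x ∈ Yset n k m J ↔
      (∀ i : Fin n, x i ∈ Set.Icc 0 ((2:ℝ)^(-(m (i:ℕ) k : ℤ)))) ∧
      ∀ i : Fin n, ∀ μ ∈ Finset.Icc (J ((i:ℕ)+1)) (J (i:ℕ)),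
        rademacher (m (i:ℕ) μ) (x i) = 1 := by
  unfold Yset stdRect
  simp only [Set.mem_inter_iff, Set.mem_pi, Set.mem_univ, true_implies, Set.mem_setOf_eq]
  apply and_congr Iff.rfl
  have h01 : ∀ i ∈ Finset.univ, (∏ μ ∈ Finset.Icc (J (((i:Fin n):ℕ)+1)) (J ((i:Fin n):ℕ)), rademacher (m ((i:Fin n):ℕ) μ) (x i)) = 0 ∨ (∏ μ ∈ Finset.Icc (J (((i:Fin n):ℕ)+1)) (J ((i:Fin n):ℕ)), rademacher (m ((i:Fin n):ℕ) μ) (x i)) = 1 := by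
    intro i _
    by_cases hall : ∀ μ ∈ Finset.Icc (J ((i:ℕ)+1)) (J (i:ℕ)), rademacher (m (i:ℕ) μ) (x i) = 1
    · right; exact Finset.prod_eq_one hall
    · left
      push_neg at hall
      obtain ⟨μ, hμ, hne⟩ := hall
      exact Finset.prod_eq_zero hμ ((rademacher_mem01 _ _).resolve_right hne)
  rw [prod_eq_one_iff' _ _ h01]
  simp only [Finset.mem_univ, true_implies]
  apply forall_congr'
  intro i
  rw [prod_eq_one_iff' _ _ (fun μ _ => rademacher_mem01 _ _)]

lemma slice_sum_le {β : Type*} [MeasurableSpace β] (μ : Measure β)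
    (D : ℕ → Set β) (hD : ∀ i, MeasurableSet (D i))
    (hdisj : ∀ i j, i ≠ j → Disjoint (D i) (D j))
    (F : Finset ℕ) : ∀ U : Set β, ∑ i ∈ F, μ (U ∩ D i) ≤ μ U := by
  classical
  induction F using Finset.induction_on with
  | empty => intro U; simp
  | @insert a F haF ih =>
    intro U
    rw [Finset.sum_insert haF]
    have key := measure_inter_add_diff (μ := μ) U (hD a)
    have h2 : ∑ i ∈ F, μ (U ∩ D i) ≤ μ (U \ D a) := by
      calc ∑ i ∈ F, μ (U ∩ D i) = ∑ i ∈ F, μ ((U \ D a) ∩ D i) := by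
            apply Finset.sum_congr rfl
            intro i hi
            congr 1
            have hdj := hdisj a i (by rintro rfl; exact haF hi)
            ext y
            constructor
            · rintro ⟨hyU, hyD⟩
              exact ⟨⟨hyU, fun hya => Set.disjoint_left.mp hdj hya hyD⟩, hyD⟩
            · rintro ⟨⟨hyU, _⟩, hyD⟩
              exact ⟨hyU, hyD⟩
        _ ≤ μ (U \ D a) := ih (U \ D a)
    calc μ (U ∩ D a) + ∑ i ∈ F, μ (U ∩ D i)
        ≤ μ (U ∩ D a) + μ (U \ D a) := add_le_add_right h2 _
      _ = μ U := key

lemma hyperplane_zero (n : ℕ) (i₀ : Fin n) (c : ℝ) :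
    volume {x : Fin n → ℝ | x i₀ = c} = 0 := by
  classical
  have heq : {x : Fin n → ℝ | x i₀ = c}
      = Set.pi Set.univ (fun i => if i = i₀ then {c} else Set.univ) := by
    ext x
    simp only [Set.mem_setOf_eq, Set.mem_pi, Set.mem_univ, true_implies]
    constructor
    · intro h i
      by_cases hi : i = i₀
      · subst hi; simp [h]
      · simp [hi]
    · intro h
      have := h i₀
      simpa using this
  rw [heq, volume_pi_pi]
  apply Finset.prod_eq_zero (Finset.mem_univ i₀)
  simp

lemma radset_meas (q : ℕ) : MeasurableSet {t : ℝ | rademacher q t = 1} := by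
  have heq : {t : ℝ | rademacher q t = 1}
      = {t : ℝ | Int.fract ((2:ℝ)^(q-1) * t) < 1/2} := by
    ext t; exact rademacher_eq_one_iff q t
  rw [heq]
  exact measurableSet_lt (measurable_fract.comp ((measurable_id.const_mul _))) measurable_const


def Aset' (k r : ℕ) (m : ℕ → ℕ → ℕ) (j : ℕ → ℕ) (jr : ℕ) : Set ℝ :=
  {t : ℝ | t ∈ Set.Icc 0 ((2:ℝ)^(-(m (r-2) k : ℤ))) ∧
    ∀ μ ∈ Finset.Icc jr (j (r-2)), rademacher (m (r-2) μ) t = 1}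

def Qset' (n k r : ℕ) (m : ℕ → ℕ → ℕ) (j : ℕ → ℕ) (i₀ : Fin n) (jr : ℕ) :
    Set (Fin n → ℝ) :=
  ⋃ J ∈ { J : ℕ → ℕ | J 0 = k ∧ J n = 0 ∧ (∀ a b : ℕ, a ≤ b → J b ≤ J a) ∧
      ∀ l, 1 ≤ l → l < r → J l = (fun l => if l = r - 1 then jr else j l) l },
    {x : Fin n → ℝ | ∀ i : Fin n, i ≠ i₀ →
      (x i ∈ Set.Icc 0 ((2:ℝ)^(-(m (i:ℕ) k : ℤ))) ∧
       ∀ μ ∈ Finset.Icc (J ((i:ℕ)+1)) (J (i:ℕ)), rademacher (m (i:ℕ) μ) (x i) = 1)}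

lemma Eset_decomp (n k r : ℕ) (hn : 2 ≤ n) (hr2 : 2 ≤ r) (hrn : r ≤ n)
    (m : ℕ → ℕ → ℕ) (j : ℕ → ℕ) (hj0 : j 0 = k) (jr : ℕ) (hd : r - 2 < n) :
    Eset n k r m (fun l => if l = r - 1 then jr else j l) =
      {x : Fin n → ℝ | x ⟨r-2, hd⟩ ∈ Aset' k r m j jr} ∩
        Qset' n k r m j ⟨r-2, hd⟩ jr := by
  set i₀ : Fin n := ⟨r-2, hd⟩ with hi₀
  have hv : (i₀ : ℕ) = r - 2 := rfl
  have e1 : r - 2 + 1 = r - 1 := by omega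
  ext x
  constructor
  · intro hx
    obtain ⟨J, hJ, hY⟩ := Set.mem_iUnion₂.mp hx
    obtain ⟨hJ0, hJn, hJmono, hJpre⟩ := hJ
    rw [Yset_mem_iff] at hY
    obtain ⟨hrect, hrad⟩ := hY
    have hJr1 : J (r-1) = jr := by
      have h := hJpre (r-1) (by omega) (by omega)
      simpa using h
    have hJr2 : J (r-2) = j (r-2) := by
      by_cases h2 : r = 2
      · subst h2; simp only [show (2:ℕ)-2 = 0 from rfl, hJ0, hj0]
      · have h := hJpre (r-2) (by omega) (by omega)
        simpa [show r - 2 ≠ r - 1 by omega] using h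
    constructor
    · refine ⟨hrect i₀, ?_⟩
      have hradi := hrad i₀
      rw [hv, e1, hJr1, hJr2] at hradi
      exact hradi
    · exact Set.mem_iUnion₂.mpr ⟨J, ⟨hJ0, hJn, hJmono, hJpre⟩,
        fun i hi => ⟨hrect i, hrad i⟩⟩
  · rintro ⟨hxA, hxQ⟩
    obtain ⟨J, hJ, hYQ⟩ := Set.mem_iUnion₂.mp hxQ
    obtain ⟨hJ0, hJn, hJmono, hJpre⟩ := hJ
    have hJr1 : J (r-1) = jr := by
      have h := hJpre (r-1) (by omega) (by omega)
      simpa using h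
    have hJr2 : J (r-2) = j (r-2) := by
      by_cases h2 : r = 2
      · subst h2; simp only [show (2:ℕ)-2 = 0 from rfl, hJ0, hj0]
      · have h := hJpre (r-2) (by omega) (by omega)
        simpa [show r - 2 ≠ r - 1 by omega] using h
    refine Set.mem_iUnion₂.mpr ⟨J, ⟨hJ0, hJn, hJmono, hJpre⟩,
      (Yset_mem_iff _ _ _ _ _).mpr ⟨?_, ?_⟩⟩
    · intro i
      by_cases hi : i = i₀
      · subst hi; exact hxA.1
      · exact (hYQ i hi).1
    · intro i μ hμ
      by_cases hi : i = i₀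
      · subst hi
        apply hxA.2
        rw [hv, e1, hJr1, hJr2] at hμ
        exact hμ
      · exact (hYQ i hi).2 μ hμ


/-- Claim `cl.E`. With `Y_J` and `E_{j₁,…,j_{r-1}}` built from the
Rademacher-type functions and strictly decreasing positive integers `m i 0 > ⋯ > m i k`,
for every `2 ≤ r ≤ n` and every nonincreasing prefix `k = j₀ ≥ j₁ ≥ ⋯ ≥ j_{r-2} ≥ 0`,
`|⋃_{j=0}^{j_{r-2}} E_{j₁,…,j_{r-2},j}| ≥ (1/2) ∑_{j=0}^{j_{r-2}} |E_{j₁,…,j_{r-2},j}|`. -/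
theorem measure_union_Eset_ge_half_sum (n : ℕ) (hn : 2 ≤ n) (k : ℕ)
    (m : ℕ → ℕ → ℕ)
    (hpos : ∀ i < n, ∀ j ≤ k, 1 ≤ m i j)
    (hdec : ∀ i < n, ∀ j < k, m i (j + 1) < m i j)
    (r : ℕ) (hr2 : 2 ≤ r) (hrn : r ≤ n)
    (j : ℕ → ℕ) (hj0 : j 0 = k)
    (hjmono : ∀ a b : ℕ, a ≤ b → b ≤ r - 2 → j b ≤ j a) :
    (1 / 2 : ℝ≥0∞) * ∑ jr ∈ Finset.range (j (r - 2) + 1),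
        volume (Eset n k r m (fun l => if l = r - 1 then jr else j l)) ≤
      volume (⋃ jr ∈ Finset.range (j (r - 2) + 1),
        Eset n k r m (fun l => if l = r - 1 then jr else j l)) := by
  classical
  have hi0lt : r - 2 < n := by omega
  set i₀ : Fin n := ⟨r - 2, hi0lt⟩ with hi₀
  have hJJk : j (r - 2) ≤ k := by rw [← hj0]; exact hjmono 0 (r-2) (Nat.zero_le _) le_rfl
  -- strict antitonicity of m (r-2)
  have mlt : ∀ b ≤ k, ∀ a < b, m (r-2) b < m (r-2) a := by
    intro b
    induction b with
    | zero => intro _ a ha; omega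
    | succ b ih =>
      intro hbk a ha
      rcases Nat.lt_succ_iff_lt_or_eq.mp ha with h | h
      · exact lt_trans (hdec (r-2) hi0lt b (by omega)) (ih (by omega) a h)
      · subst h; exact hdec (r-2) hi0lt a (by omega)
  have Amono : ∀ a b : ℕ, a ≤ b → Aset' k r m j a ⊆ Aset' k r m j b := by
    intro a b hab t ht
    refine ⟨ht.1, fun μ hμ => ht.2 μ ?_⟩
    rw [Finset.mem_Icc] at hμ ⊢
    omega
  have Ameas : ∀ jr, MeasurableSet (Aset' k r m j jr) := by
    intro jr
    have heq : Aset' k r m j jr = Set.Icc 0 ((2:ℝ)^(-(m (r-2) k : ℤ))) ∩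
        ⋂ μ ∈ Finset.Icc jr (j (r-2)), {t : ℝ | rademacher (m (r-2) μ) t = 1} := by
      ext t
      simp only [Aset', Set.mem_setOf_eq, Set.mem_inter_iff, Set.mem_iInter]
    rw [heq]
    exact measurableSet_Icc.inter
      (MeasurableSet.biInter (Set.to_countable _) fun μ _ => radset_meas _)
  set D : ℕ → Set ℝ := fun jr =>
    if jr = 0 then Aset' k r m j 0 else Aset' k r m j jr \ Aset' k r m j (jr - 1) with hD
  have Dmeas : ∀ jr, MeasurableSet (D jr) := by
    intro jr
    by_cases h0 : jr = 0
    · simp only [hD, if_pos h0]; exact Ameas 0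
    · simp only [hD, if_neg h0]; exact (Ameas jr).diff (Ameas _)
  have Ddisj : ∀ a b : ℕ, a ≠ b → Disjoint (D a) (D b) := by
    have keyd : ∀ a b : ℕ, a < b → Disjoint (D a) (D b) := by
      intro a b hab
      refine Set.disjoint_left.mpr fun t hta htb => ?_
      have h1 : t ∈ Aset' k r m j a := by
        by_cases ha0 : a = 0
        · subst ha0; simp only [hD, if_pos rfl] at hta; exact hta
        · simp only [hD, if_neg ha0] at hta; exact hta.1
      have h2 : t ∈ Aset' k r m j (b-1) := Amono a (b-1) (by omega) h1
      simp only [hD, if_neg (by omega : ¬ b = 0)] at htb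
      exact htb.2 h2
    intro a b hab
    rcases lt_or_gt_of_ne hab with h | h
    · exact keyd a b h
    · exact (keyd b a h).symm
  set Dc : ℕ → Set (Fin n → ℝ) := fun jr => (fun x => x i₀) ⁻¹' (D jr) with hDc
  have hdecomp : ∀ jr, Eset n k r m (fun l => if l = r - 1 then jr else j l) =
      {x : Fin n → ℝ | x i₀ ∈ Aset' k r m j jr} ∩ Qset' n k r m j i₀ jr :=
    fun jr => Eset_decomp n k r hn hr2 hrn m j hj0 jr hi0lt
  have key : ∀ jr ≤ j (r-2), (1/2 : ℝ≥0∞) *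
      volume (Eset n k r m (fun l => if l = r - 1 then jr else j l)) ≤
      volume (Eset n k r m (fun l => if l = r - 1 then jr else j l) ∩ Dc jr) := by
    intro jr hjr
    by_cases h0 : jr = 0
    · subst h0
      have hsub : Eset n k r m (fun l => if l = r - 1 then 0 else j l) ⊆ Dc 0 := by
        intro x hx
        rw [hdecomp 0] at hx
        simp only [hDc, hD, Set.mem_preimage, if_pos rfl]
        exact hx.1
      rw [Set.inter_eq_self_of_subset_left hsub]
      calc (1/2 : ℝ≥0∞) * volume (Eset n k r m (fun l => if l = r - 1 then 0 else j l))
          ≤ 1 * volume (Eset n k r m (fun l => if l = r - 1 then 0 else j l)) := by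
            gcongr
            norm_num
        _ = _ := one_mul _
    · set M' := m (r-2) (jr - 1) with hM'
      set δ : ℝ := ((2:ℝ)^M')⁻¹ with hδ
      have hδpos : (0:ℝ) < δ := by rw [hδ]; positivity
      set v : Fin n → ℝ := fun i => if i = i₀ then δ else 0 with hv
      set S := Eset n k r m (fun l => if l = r - 1 then jr else j l) ∩ Dc jr with hS
      set W := {x : Fin n → ℝ | x i₀ ∈ Aset' k r m j (jr - 1)} ∩ Qset' n k r m j i₀ jr
        with hW
      have hM'M : m (r-2) k < M' := by
        rw [hM']
        exact mlt k le_rfl (jr-1) (by omega)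
      have hEsub : Eset n k r m (fun l => if l = r - 1 then jr else j l) ⊆ S ∪ W := by
        intro x hx
        rw [hdecomp jr] at hx
        by_cases hxa : x i₀ ∈ Aset' k r m j (jr - 1)
        · right; exact ⟨hxa, hx.2⟩
        · left
          refine ⟨by rw [hdecomp jr]; exact hx, ?_⟩
          simp only [hDc, Set.mem_preimage, hD, if_neg h0]
          exact ⟨hx.1, hxa⟩
      have hWsub : W ⊆ ((fun y => v + y) ⁻¹' S) ∪
          {x : Fin n → ℝ | x i₀ = (2:ℝ)^(-(m (r-2) k : ℤ))} := by
        rintro x ⟨hxA, hxQ⟩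
        simp only [Set.mem_setOf_eq] at hxA
        have hxIcc := hxA.1
        rcases eq_or_lt_of_le hxIcc.2 with heq | hlt
        · right; exact heq
        · left
          have hrM' : rademacher M' (x i₀) = 1 :=
            hxA.2 (jr-1) (Finset.mem_Icc.mpr ⟨le_rfl, by omega⟩)
          have h0le : (0:ℝ) ≤ x i₀ := hxIcc.1
          have hBinv : (2:ℝ)^(-(m (r-2) k : ℤ)) = ((2:ℝ)^(m (r-2) k))⁻¹ := by
            rw [zpow_neg, zpow_natCast]
          have hltB : x i₀ < ((2:ℝ)^(m (r-2) k))⁻¹ := by rw [← hBinv]; exact hlt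
          have hstay : x i₀ + δ ≤ (2:ℝ)^(-(m (r-2) k : ℤ)) := by
            rw [hBinv, hδ]
            exact stay_le hM'M h0le hltB hrM'
          have hvx0 : (v + x) i₀ = x i₀ + δ := by
            simp [hv, Pi.add_apply, add_comm]
          have hvxne : ∀ i : Fin n, i ≠ i₀ → (v + x) i = x i := by
            intro i hi
            simp [hv, Pi.add_apply, if_neg hi]
          have hAjr : (v + x) i₀ ∈ Aset' k r m j jr := by
            rw [hvx0]
            refine ⟨⟨by linarith, hstay⟩, ?_⟩
            intro μ hμ
            obtain ⟨hμ1, hμ2⟩ := Finset.mem_Icc.mp hμ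
            have h1q : 1 ≤ m (r-2) μ := hpos (r-2) hi0lt μ (by omega)
            have hqM' : m (r-2) μ < M' := by
              rw [hM']
              exact mlt μ (by omega) (jr-1) (by omega)
            rw [hδ, rademacher_shift h1q hqM' hrM']
            exact hxA.2 μ (Finset.mem_Icc.mpr ⟨by omega, hμ2⟩)
          have hnotA : (v + x) i₀ ∉ Aset' k r m j (jr - 1) := by
            intro hcon
            have h1M' : 1 ≤ M' := hpos (r-2) hi0lt (jr-1) (by omega)
            have hflip := rademacher_flip h1M' hrM'
            have hone := hcon.2 (jr-1) (Finset.mem_Icc.mpr ⟨le_rfl, by omega⟩)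
            rw [hvx0, hδ] at hone
            rw [← hM'] at hone
            rw [hflip] at hone
            norm_num at hone
          have hQ : (v + x) ∈ Qset' n k r m j i₀ jr := by
            obtain ⟨J, hJ, hYQ⟩ := Set.mem_iUnion₂.mp hxQ
            refine Set.mem_iUnion₂.mpr ⟨J, hJ, ?_⟩
            intro i hi
            rw [hvxne i hi]
            exact hYQ i hi
          refine Set.mem_preimage.mpr ⟨?_, ?_⟩
          · rw [hdecomp jr]; exact ⟨hAjr, hQ⟩
          · simp only [hDc, Set.mem_preimage, hD, if_neg h0]
            exact ⟨hAjr, hnotA⟩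
      have hcount : volume (Eset n k r m (fun l => if l = r - 1 then jr else j l))
          ≤ 2 * volume S := by
        calc volume (Eset n k r m (fun l => if l = r - 1 then jr else j l))
            ≤ volume (S ∪ W) := measure_mono hEsub
          _ ≤ volume S + volume W := measure_union_le _ _
          _ ≤ volume S + (volume ((fun y => v + y) ⁻¹' S) +
              volume {x : Fin n → ℝ | x i₀ = (2:ℝ)^(-(m (r-2) k : ℤ))}) := by
              gcongr
              exact le_trans (measure_mono hWsub) (measure_union_le _ _)
          _ = volume S + volume S := by
              rw [hyperplane_zero, add_zero, measure_preimage_add]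
          _ = 2 * volume S := (two_mul _).symm
      calc (1/2:ℝ≥0∞) * volume (Eset n k r m (fun l => if l = r - 1 then jr else j l))
          ≤ (1/2:ℝ≥0∞) * (2 * volume S) := by gcongr
        _ = volume S := by
            rw [← mul_assoc, one_div, ENNReal.inv_mul_cancel two_ne_zero ENNReal.ofNat_ne_top,
              one_mul]
  calc (1/2:ℝ≥0∞) * ∑ jr ∈ Finset.range (j (r-2) + 1),
        volume (Eset n k r m (fun l => if l = r - 1 then jr else j l))
      = ∑ jr ∈ Finset.range (j (r-2) + 1), (1/2:ℝ≥0∞) *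
        volume (Eset n k r m (fun l => if l = r - 1 then jr else j l)) :=
        Finset.mul_sum _ _ _
    _ ≤ ∑ jr ∈ Finset.range (j (r-2) + 1),
        volume (Eset n k r m (fun l => if l = r - 1 then jr else j l) ∩ Dc jr) :=
        Finset.sum_le_sum fun jr hjr => key jr (by
          have := Finset.mem_range.mp hjr; omega)
    _ ≤ ∑ jr ∈ Finset.range (j (r-2) + 1),
        volume ((⋃ jr ∈ Finset.range (j (r-2) + 1),
          Eset n k r m (fun l => if l = r - 1 then jr else j l)) ∩ Dc jr) := by
        apply Finset.sum_le_sum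
        intro jr hjr
        apply measure_mono
        apply Set.inter_subset_inter_left
        intro y hy
        exact Set.mem_biUnion hjr hy
    _ ≤ volume (⋃ jr ∈ Finset.range (j (r-2) + 1),
        Eset n k r m (fun l => if l = r - 1 then jr else j l)) :=
        slice_sum_le volume Dc
          (fun i => (measurable_pi_apply i₀) (Dmeas i))
          (fun a b hab => Disjoint.preimage _ (Ddisj a b hab)) _ _



end
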